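/- For every real number s and every ε > 0 there exists a piecewise C¹ horizontal curve γ : [0,1] → 𝓗 with γ(0) = (0,0,0), γ(1) = (0,0,s), and sub-Riemannian length ℓ_g(γ) < ε. Consequently the sub-Riemannian geodesic distance satisfies ρ((0,0,0),(0,0,s)) = 0 for every s ∈ ℝ. -/

import Mathlib

open scoped RealInnerProductSpace
open Real

noncomputable section

abbrev l2 : Type := lp (fun _ : ℕ => ℝ) 2

abbrev Hei : Type := l2 × l2 × ℝ

/-- The group operation of the infinite dimensional Heisenberg group. -/
def hMul (p q : Hei) : Hei :=
  (p.1 + q.1, p.2.1 + q.2.1, p.2.2 + q.2.2 + ⟪p.1, q.2.1⟫ - ⟪p.2.1, q.1⟫)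

/-- The square of the weak norm `‖u‖_η`. -/
def etaSq (u : l2) : ℝ := ∑' k : ℕ, (u k)^2 / ((k : ℝ) + 1)

/-- The square of the weak Riemannian norm `‖v‖_{σ,p}`. -/
def sigmaSq (p v : Hei) : ℝ :=
  etaSq v.1 + etaSq v.2.1 + (v.2.2 - ⟪p.1, v.2.1⟫ + ⟪p.2.1, v.1⟫)^2

def PiecewiseC1 (γ : ℝ → Hei) : Prop :=
  ContinuousOn γ (Set.Icc 0 1) ∧
  ∃ S : Finset ℝ, ∀ t ∈ Set.Icc (0:ℝ) 1, t ∉ S →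
    DifferentiableAt ℝ γ t ∧ ContinuousAt (deriv γ) t

def Horizontal (γ : ℝ → Hei) : Prop :=
  ∀ t ∈ Set.Icc (0:ℝ) 1, DifferentiableAt ℝ γ t →
    deriv (fun s => (γ s).2.2) t
      = ⟪(γ t).1, deriv (fun s => (γ s).2.1) t⟫
        - ⟪(γ t).2.1, deriv (fun s => (γ s).1) t⟫

def lenSigma (γ : ℝ → Hei) : ℝ :=
  ∫ t in (0:ℝ)..1, Real.sqrt (sigmaSq (γ t) (deriv γ t))

def lenG (γ : ℝ → Hei) : ℝ :=
  ∫ t in (0:ℝ)..1,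
    Real.sqrt (etaSq (deriv (fun s => (γ s).1) t) + etaSq (deriv (fun s => (γ s).2.1) t))

def dSigma (p q : Hei) : ℝ :=
  sInf {L | ∃ γ : ℝ → Hei, PiecewiseC1 γ ∧ γ 0 = p ∧ γ 1 = q ∧ lenSigma γ = L}

def rho (p q : Hei) : ℝ :=
  sInf {L | ∃ γ : ℝ → Hei, PiecewiseC1 γ ∧ Horizontal γ ∧ γ 0 = p ∧ γ 1 = q ∧ lenG γ = L}

def sigma0 (v w : Hei) : ℝ :=
  (∑' k : ℕ, ((v.1 k) * (w.1 k) + (v.2.1 k) * (w.2.1 k)) / ((k : ℝ) + 1)) + v.2.2 * w.2.2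

def bracket (X Y : Hei) : Hei := (0, 0, 2 * (⟪X.1, Y.2.1⟫ - ⟪X.2.1, Y.1⟫))

/-- `eVec n` is the `(n+1)`-th standard basis vector of `ℓ²`. -/
def eVec (n : ℕ) : l2 := lp.single 2 n 1

def e3 : Hei := (0, 0, 1)

lemma etaSq_smul_eVec (n : ℕ) (u : ℝ) : etaSq (u • eVec n) = u^2 / ((n:ℝ)+1) := by
  unfold etaSq
  rw [tsum_eq_single n]
  · simp [eVec, lp.coeFn_smul, lp.single_apply_self]
  · intro k hk
    simp [eVec, lp.coeFn_smul, lp.single_apply_ne _ _ _ hk, Pi.single_apply, hk]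

lemma inner_smul_eVec (n : ℕ) (u v : ℝ) : ⟪u • eVec n, v • eVec n⟫ = u * v := by
  rw [real_inner_smul_left, real_inner_smul_right]
  have : ⟪eVec n, eVec n⟫ = (1:ℝ) := by
    rw [eVec, lp.inner_single_left]
    simp [lp.single_apply_self, eVec]
  rw [this]; ring

lemma key (s : ℝ) (ε : ℝ) (hε : 0 < ε) :
    ∃ γ : ℝ → Hei, PiecewiseC1 γ ∧ Horizontal γ ∧
      γ 0 = ((0, 0, 0) : Hei) ∧ γ 1 = ((0, 0, s) : Hei) ∧ lenG γ < ε := by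
  set c : ℝ := s / (2 * π) with hc
  obtain ⟨n, hn⟩ := exists_nat_gt (4 * π ^ 2 * |c| / ε ^ 2)
  set a : ℝ := Real.sign c * Real.sqrt |c| with hadef
  set b : ℝ := Real.sqrt |c| with hbdef
  have hsign : Real.sign c * |c| = c := by
    rcases lt_trichotomy c 0 with h | h | h
    · rw [Real.sign_of_neg h, abs_of_neg h]; ring
    · simp [h]
    · rw [Real.sign_of_pos h, abs_of_pos h]; ring
  have hab : a * b = c := by
    rw [hadef, hbdef, mul_assoc, Real.mul_self_sqrt (abs_nonneg c), hsign]
  have hb2 : b ^ 2 = |c| := Real.sq_sqrt (abs_nonneg c)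
  have ha2 : a ^ 2 ≤ |c| := by
    rw [hadef, mul_pow, hb2]
    rcases lt_trichotomy c 0 with h | h | h
    · rw [Real.sign_of_neg h]; nlinarith [abs_nonneg c]
    · simp [h]
    · rw [Real.sign_of_pos h]; nlinarith [abs_nonneg c]
  set E : l2 := eVec n with hE
  clear_value a b c E
  set f1 : ℝ → ℝ := fun t => a * Real.sin (2 * π * t) with hf1
  set f2 : ℝ → ℝ := fun t => b * (1 - Real.cos (2 * π * t)) with hf2
  set f3 : ℝ → ℝ := fun t => c * (2 * π * t - Real.sin (2 * π * t)) with hf3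
  set d1 : ℝ → ℝ := fun t => a * (Real.cos (2 * π * t) * (2 * π)) with hd1
  set d2 : ℝ → ℝ := fun t => b * (Real.sin (2 * π * t) * (2 * π)) with hd2
  set d3 : ℝ → ℝ := fun t => c * (2 * π - Real.cos (2 * π * t) * (2 * π)) with hd3
  have hlin : ∀ t : ℝ, HasDerivAt (fun t : ℝ => 2 * π * t) (2 * π) t := fun t => by
    simpa using (hasDerivAt_id t).const_mul (2 * π)
  have h1 : ∀ t, HasDerivAt f1 (d1 t) t := fun t => ((hlin t).sin).const_mul a
  have h2 : ∀ t, HasDerivAt f2 (d2 t) t := fun t => by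
    have := ((hasDerivAt_const t (1:ℝ)).sub ((hlin t).cos)).const_mul b
    refine this.congr_deriv ?_
    show _ = b * (Real.sin (2 * π * t) * (2 * π)); ring
  have h3 : ∀ t, HasDerivAt f3 (d3 t) t := fun t => ((hlin t).sub ((hlin t).sin)).const_mul c
  set γ : ℝ → Hei := fun t => (f1 t • E, f2 t • E, f3 t) with hγ
  have hg1 : ∀ t, HasDerivAt (fun s => (γ s).1) (d1 t • E) t := fun t => (h1 t).smul_const E
  have hg2 : ∀ t, HasDerivAt (fun s => (γ s).2.1) (d2 t • E) t := fun t => (h2 t).smul_const E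
  have hg3 : ∀ t, HasDerivAt (fun s => (γ s).2.2) (d3 t) t := h3
  have hgd : ∀ t, HasDerivAt γ (d1 t • E, d2 t • E, d3 t) t := fun t =>
    (hg1 t).prodMk ((hg2 t).prodMk (hg3 t))
  have hderiv : deriv γ = fun t => ((d1 t • E, d2 t • E, d3 t) : Hei) :=
    funext fun t => (hgd t).deriv
  refine ⟨γ, ⟨?_, ∅, fun t _ _ => ⟨(hgd t).differentiableAt, ?_⟩⟩, ?_, ?_, ?_, ?_⟩
  · -- continuity
    apply Continuous.continuousOn
    apply Continuous.prodMk
    · exact ((continuous_const.mul ((Real.continuous_sin).comp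
        (continuous_const.mul continuous_id))).smul continuous_const)
    apply Continuous.prodMk
    · exact ((continuous_const.mul (continuous_const.sub ((Real.continuous_cos).comp
        (continuous_const.mul continuous_id)))).smul continuous_const)
    · exact continuous_const.mul ((continuous_const.mul continuous_id).sub
        ((Real.continuous_sin).comp (continuous_const.mul continuous_id)))
  · -- continuity of deriv
    rw [hderiv]
    apply Continuous.continuousAt
    apply Continuous.prodMk
    · exact ((continuous_const.mul (((Real.continuous_cos).comp
        (continuous_const.mul continuous_id)).mul continuous_const)).smul continuous_const)
    apply Continuous.prodMk
    · exact ((continuous_const.mul (((Real.continuous_sin).comp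
        (continuous_const.mul continuous_id)).mul continuous_const)).smul continuous_const)
    · exact continuous_const.mul (continuous_const.sub (((Real.continuous_cos).comp
        (continuous_const.mul continuous_id)).mul continuous_const))
  · -- horizontal
    intro t _ _
    rw [(hg3 t).deriv, (hg2 t).deriv, (hg1 t).deriv]
    show d3 t = ⟪f1 t • E, d2 t • E⟫ - ⟪f2 t • E, d1 t • E⟫
    rw [hE, inner_smul_eVec, inner_smul_eVec]
    have hp := Real.sin_sq_add_cos_sq (2 * π * t)
    simp only [hd3, hf1, hd2, hf2, hd1]
    linear_combination (-(2*π)*(1 - Real.cos (2*π*t))) * hab + (-(2*π)*a*b) * hp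
  · -- γ 0
    simp only [hγ, hf1, hf2, hf3]
    norm_num
  · -- γ 1
    simp only [hγ, hf1, hf2, hf3]
    rw [mul_one, Real.sin_two_pi, Real.cos_two_pi]
    norm_num
    rw [hc]
    field_simp
  · -- length
    have hrw : ∀ t : ℝ, Real.sqrt (etaSq (deriv (fun s => (γ s).1) t)
        + etaSq (deriv (fun s => (γ s).2.1) t))
        = Real.sqrt ((d1 t ^ 2 + d2 t ^ 2) / ((n : ℝ) + 1)) := by
      intro t
      rw [(hg1 t).deriv, (hg2 t).deriv, hE, etaSq_smul_eVec, etaSq_smul_eVec]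
      ring_nf
    set M : ℝ := Real.sqrt (4 * π ^ 2 * |c| / ((n : ℝ) + 1)) with hM
    have hbound : ∀ t : ℝ, Real.sqrt ((d1 t ^ 2 + d2 t ^ 2) / ((n : ℝ) + 1)) ≤ M := by
      intro t
      apply Real.sqrt_le_sqrt
      apply div_le_div_of_nonneg_right ?_ (by positivity)
      have hs := Real.sin_sq_add_cos_sq (2 * π * t)
      have hc2 : Real.cos (2 * π * t) ^ 2 ≤ 1 := Real.cos_sq_le_one _
      have hs2 : Real.sin (2 * π * t) ^ 2 ≤ 1 := Real.sin_sq_le_one _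
      simp only [hd1, hd2]
      have h1' : a ^ 2 * Real.cos (2*π*t) ^ 2 ≤ |c| * Real.cos (2*π*t) ^ 2 :=
        mul_le_mul_of_nonneg_right ha2 (sq_nonneg _)
      have h2' : b ^ 2 * Real.sin (2*π*t) ^ 2 = |c| * Real.sin (2*π*t) ^ 2 := by rw [hb2]
      have hkey : a ^ 2 * Real.cos (2*π*t) ^ 2 + b ^ 2 * Real.sin (2*π*t) ^ 2 ≤ |c| := by
        calc a ^ 2 * Real.cos (2*π*t) ^ 2 + b ^ 2 * Real.sin (2*π*t) ^ 2
            ≤ |c| * Real.cos (2*π*t) ^ 2 + |c| * Real.sin (2*π*t) ^ 2 := by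
              rw [h2']; linarith
          _ = |c| * (Real.sin (2*π*t) ^ 2 + Real.cos (2*π*t) ^ 2) := by ring
          _ = |c| := by rw [hs]; ring
      have hrg : (a * (Real.cos (2*π*t) * (2*π))) ^ 2 + (b * (Real.sin (2*π*t) * (2*π))) ^ 2
          = 4 * π ^ 2 * (a ^ 2 * Real.cos (2*π*t) ^ 2 + b ^ 2 * Real.sin (2*π*t) ^ 2) := by
        ring
      rw [hrg]
      exact mul_le_mul_of_nonneg_left hkey (by positivity)
    have hMε : M < ε := by
      rw [hM]
      rw [Real.sqrt_lt' hε]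
      rw [div_lt_iff₀ (by positivity)]
      calc 4 * π ^ 2 * |c| = (4 * π ^ 2 * |c| / ε ^ 2) * ε ^ 2 := by field_simp
        _ < ((n : ℝ) + 1) * ε ^ 2 := by
            apply mul_lt_mul_of_pos_right _ (by positivity)
            linarith
        _ = ε ^ 2 * ((n : ℝ) + 1) := by ring
    have hcont : Continuous fun t => Real.sqrt ((d1 t ^ 2 + d2 t ^ 2) / ((n : ℝ) + 1)) := by
      apply Real.continuous_sqrt.comp
      apply Continuous.div_const
      apply Continuous.add
      · exact ((continuous_const.mul (((Real.continuous_cos).comp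
          (continuous_const.mul continuous_id)).mul continuous_const)).pow 2)
      · exact ((continuous_const.mul (((Real.continuous_sin).comp
          (continuous_const.mul continuous_id)).mul continuous_const)).pow 2)
    calc lenG γ = ∫ t in (0:ℝ)..1, Real.sqrt ((d1 t ^ 2 + d2 t ^ 2) / ((n : ℝ) + 1)) := by
          unfold lenG; exact intervalIntegral.integral_congr fun t _ => hrw t
      _ ≤ ∫ _ in (0:ℝ)..1, M := by
          apply intervalIntegral.integral_mono_on (by norm_num)
            (hcont.intervalIntegrable 0 1) (intervalIntegrable_const)
          exact fun t _ => hbound t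
      _ = M := by simp
      _ < ε := hMε

/-- For every real `s` and `ε > 0` there is a piecewise `C¹` horizontal curve from the
origin to `(0,0,s)` of sub-Riemannian length less than `ε`; hence `ρ((0,0,0),(0,0,s)) = 0`. -/
theorem statement1 :
    (∀ s : ℝ, ∀ ε > 0, ∃ γ : ℝ → Hei, PiecewiseC1 γ ∧ Horizontal γ ∧
      γ 0 = ((0, 0, 0) : Hei) ∧ γ 1 = ((0, 0, s) : Hei) ∧ lenG γ < ε) ∧
    (∀ s : ℝ, rho ((0, 0, 0) : Hei) ((0, 0, s) : Hei) = 0) := by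
  refine ⟨fun s ε hε => key s ε hε, fun s => ?_⟩
  unfold rho
  set T : Set ℝ := {L | ∃ γ : ℝ → Hei, PiecewiseC1 γ ∧ Horizontal γ ∧
    γ 0 = ((0,0,0) : Hei) ∧ γ 1 = ((0,0,s) : Hei) ∧ lenG γ = L} with hT
  have hnonneg : ∀ L ∈ T, (0:ℝ) ≤ L := by
    rintro L ⟨γ, _, _, _, _, rfl⟩
    exact intervalIntegral.integral_nonneg (by norm_num) (fun t _ => Real.sqrt_nonneg _)
  have hbdd : BddBelow T := ⟨0, hnonneg⟩
  have hle : ∀ ε : ℝ, 0 < ε → sInf T < ε := by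
    intro ε hε
    obtain ⟨γ, h1, h2, h3, h4, h5⟩ := key s ε hε
    exact lt_of_le_of_lt (csInf_le hbdd ⟨γ, h1, h2, h3, h4, rfl⟩) h5
  have h0 : 0 ≤ sInf T := Real.sInf_nonneg hnonneg
  by_contra hne
  have : 0 < sInf T := lt_of_le_of_ne h0 (Ne.symm hne)
  exact absurd (hle _ this) (lt_irrefl _)

end
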